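/- Let H be an N×N real symmetric matrix and, for w ∈ ℂ⁺, write G(w) = (H − w·I)^{−1}. For every M > 0 there exists a constant C depending only on M such that: if z ∈ ℂ⁺ satisfies max_{1≤i≤N} |G_{ii}(z)| ≤ M, then for every z′ ∈ ℂ⁺ with |z′ − z| ≤ Im z / 2 and all indices 1 ≤ i, j ≤ N, one has |G_{ij}(z′) − G_{ij}(z)| ≤ C·|z′ − z| / Im z. -/

import Mathlib

open scoped Classical

noncomputable section

namespace Paper

/-- The degree of a vertex `v` in `G`. -/
def deg {V : Type} (G : SimpleGraph V) (v : V) : ℕ :=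
  Nat.card {u : V // G.Adj v u}

/-- `G` is a `d`-regular graph. -/
def IsRegular {V : Type} (d : ℕ) (G : SimpleGraph V) : Prop :=
  ∀ v, deg G v = d

/-- The excess of a finite graph: #edges - #vertices + #components. -/
def excess {V : Type} (G : SimpleGraph V) : ℤ :=
  (Nat.card G.edgeSet : ℤ) - (Nat.card V : ℤ) + (Nat.card G.ConnectedComponent : ℤ)

/-- The set of vertices at graph distance at most `R` from the set `S`. -/
def ball {V : Type} (G : SimpleGraph V) (S : Set V) (R : ℝ) : Set V :=
  {v | ∃ u ∈ S, ∃ w : G.Walk u v, (w.length : ℝ) ≤ R}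

/-- There is a path between `u` and `v` of length at most `R`. -/
def distLE {V : Type} (G : SimpleGraph V) (u v : V) (R : ℝ) : Prop :=
  ∃ w : G.Walk u v, (w.length : ℝ) ≤ R

/-- The normalized adjacency matrix `A/√(d-1)`, over `ℂ`. -/
def normAdj {V : Type} (d : ℕ) (G : SimpleGraph V) : Matrix V V ℂ :=
  Matrix.of fun i j => if G.Adj i j then ((Real.sqrt ((d : ℝ) - 1) : ℂ))⁻¹ else 0

/-- The normalized adjacency matrix `A/√(d-1)`, over `ℝ`. -/
def normAdjR {V : Type} (d : ℕ) (G : SimpleGraph V) : Matrix V V ℝ :=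
  Matrix.of fun i j => if G.Adj i j then (Real.sqrt ((d : ℝ) - 1))⁻¹ else 0

/-- The Green's function `(H - z)⁻¹`. -/
def green {V : Type} [Fintype V] [DecidableEq V] (d : ℕ) (G : SimpleGraph V) (z : ℂ) :
    Matrix V V ℂ :=
  (normAdj d G - z • (1 : Matrix V V ℂ))⁻¹

/-- The Stieltjes transform `m_N(z) = Tr G(z)/N`. -/
def mN {V : Type} [Fintype V] [DecidableEq V] (d : ℕ) (G : SimpleGraph V) (z : ℂ) : ℂ :=
  (Nat.card V : ℂ)⁻¹ * Matrix.trace (green d G z)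

/-- `m_sc(z)`: the root of `m² + zm + 1 = 0` with positive imaginary part. -/
def mSC (z : ℂ) : ℂ :=
  if h : ∃ m : ℂ, m ^ 2 + z * m + 1 = 0 ∧ 0 < m.im then h.choose else 0

/-- `m_d(z) = (-z - d m_sc(z)/(d-1))⁻¹`. -/
def mD (d : ℕ) (z : ℂ) : ℂ :=
  (-z - (d : ℂ) * mSC z / ((d : ℂ) - 1))⁻¹

/-- `κ(z) = min(|Re z - 2|, |Re z + 2|)`. -/
def kappa (z : ℂ) : ℝ :=
  min |z.re - 2| |z.re + 2|

/-- The matrix `H - z - Σ_v ((d - g v - deg v)/(d-1)) Δ e_vv` defining the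
extension of `(G, g)` with weight `Δ`. -/
def extMatrix {V : Type} [Fintype V] [DecidableEq V] (d : ℕ) (G : SimpleGraph V)
    (g : V → ℕ) (Δ z : ℂ) : Matrix V V ℂ :=
  normAdj d G - z • (1 : Matrix V V ℂ) -
    Matrix.diagonal fun v => (((d : ℂ) - (g v : ℂ) - (deg G v : ℂ)) / ((d : ℂ) - 1)) * Δ

/-- The Green's function of the extension of `(G, g)` with weight `Δ`. -/
def extGreen {V : Type} [Fintype V] [DecidableEq V] (d : ℕ) (G : SimpleGraph V)
    (g : V → ℕ) (Δ z : ℂ) : Matrix V V ℂ :=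
  (extMatrix d G g Δ z)⁻¹

/-- Entry `(i,j)` of the Green's function of the extension with weight `Δ` of the
ball `B_R(S, G)`, the ball carrying the deficit function inherited from the ambient
deficit function `g0`. -/
def ballGreen {V : Type} [Fintype V] [DecidableEq V] (d : ℕ) (G : SimpleGraph V)
    (g0 : V → ℕ) (S : Set V) (R : ℝ) (Δ z : ℂ) (i j : V) : ℂ :=
  if h : i ∈ ball G S R ∧ j ∈ ball G S R then
    extGreen d (G.induce (ball G S R)) (fun v => g0 v.val) Δ z ⟨i, h.1⟩ ⟨j, h.2⟩
  else 0

/-- The quantity `Q(G,z) = (Nd)⁻¹ Σ_{i ∼ j} G^{(j)}_{ii}(z)`. -/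
def Qfun {N : ℕ} (d : ℕ) (G : SimpleGraph (Fin N)) (z : ℂ) : ℂ :=
  ((N : ℂ) * (d : ℂ))⁻¹ *
    ∑ j : Fin N, ∑ i : Fin N,
      if h : G.Adj i j then
        green d (G.induce {k : Fin N | k ≠ j}) z ⟨i, h.ne⟩ ⟨i, h.ne⟩
      else 0

/-- Logarithm in base `d - 1`. -/
def logb (d : ℕ) (x : ℝ) : ℝ :=
  Real.log x / Real.log ((d : ℝ) - 1)

/-- The radius `ℜ = (c/4) log_{d-1} N`. -/
def RR (N d : ℕ) (c : ℝ) : ℝ :=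
  (c / 4) * logb d (N : ℝ)

/-- The radius `r = r₀ log_{d-1} N`. -/
def rr (N d : ℕ) (r₀ : ℝ) : ℝ :=
  r₀ * logb d (N : ℝ)

/-- The set `Ω̄(ω)` of radius-`ℜ` tree-like `d`-regular graphs. -/
def OmegaBar (N d : ℕ) (c : ℝ) (ω : ℕ) : Set (SimpleGraph (Fin N)) :=
  {G | IsRegular d G ∧
    (∀ v : Fin N, excess (G.induce (ball G {v} (RR N d c))) ≤ (ω : ℤ)) ∧
    (Nat.card {v : Fin N // ¬ (G.induce (ball G {v} (RR N d c))).IsAcyclic} : ℝ) ≤ (N : ℝ) ^ c}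

/-- The control parameter `ε₀(z)`. -/
def eps0 (N d : ℕ) (a r : ℝ) (z : ℂ) : ℝ :=
  Real.log (N : ℝ) ^ (8 * a) *
    (((d : ℝ) - 1) ^ (-r) + Real.sqrt ((mD d z).im / ((N : ℝ) * z.im)) +
      ((N : ℝ) * z.im) ^ (-(2 / 3 : ℝ)))

/-- The control parameter `ε(z)`. -/
def eps (N d : ℕ) (a r : ℝ) (z : ℂ) : ℝ :=
  if eps0 N d a r z ≤ (kappa z + z.im) / Real.log (N : ℝ) then eps0 N d a r z
  else Real.log (N : ℝ) ^ 4 * eps0 N d a r z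

/-- The set `Ω(z)` of spectrally regular graphs. -/
def OmegaSet (N d : ℕ) (c a r₀ : ℝ) (ω : ℕ) (z : ℂ) : Set (SimpleGraph (Fin N)) :=
  {G | G ∈ OmegaBar N d c ω ∧
    norm (Qfun d G z - mSC z) ≤
      eps N d a (rr N d r₀) z / Real.sqrt (kappa z + z.im + eps N d a (rr N d r₀) z) ∧
    ∀ i j : Fin N,
      norm (green d G z i j -
          ballGreen d G (fun v => d - deg G v) {i, j} (rr N d r₀) (Qfun d G z) z i j) ≤
        eps N d a (rr N d r₀) z}

/-- The set `Ω⁻(z)`. -/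
def OmegaMinus (N d : ℕ) (c a r₀ : ℝ) (ω : ℕ) (z : ℂ) : Set (SimpleGraph (Fin N)) :=
  {G | G ∈ OmegaBar N d c ω ∧
    norm (Qfun d G z - mSC z) ≤
      eps N d a (rr N d r₀) z / (2 * Real.sqrt (kappa z + z.im + eps N d a (rr N d r₀) z)) ∧
    ∀ i j : Fin N,
      norm (green d G z i j -
          ballGreen d G (fun v => d - deg G v) {i, j} (rr N d r₀) (Qfun d G z) z i j) ≤
        eps N d a (rr N d r₀) z / 2}

/-- `(T, o)` is a depth-`k` truncated `(d-1)`-ary tree with root `o`. -/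
def IsTruncAry (d k : ℕ) {V : Type} (T : SimpleGraph V) (o : V) : Prop :=
  T.IsTree ∧ (∀ v, T.dist o v ≤ k) ∧ deg T o = d - 1 ∧
    ∀ v, v ≠ o → T.dist o v < k → deg T v = d

/-- `(T, o)` is a depth-`k` truncated `d`-regular tree with root `o`. -/
def IsTruncReg (d k : ℕ) {V : Type} (T : SimpleGraph V) (o : V) : Prop :=
  T.IsTree ∧ (∀ v, T.dist o v ≤ k) ∧ ∀ v, T.dist o v < k → deg T v = d

/-- The Kesten–McKay density. -/
def rhoD (d : ℕ) (x : ℝ) : ℝ :=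
  (1 + 1 / ((d : ℝ) - 1) - x ^ 2 / (d : ℝ))⁻¹ * Real.sqrt (max (4 - x ^ 2) 0) / (2 * Real.pi)

/-- The diameter of a finite graph. -/
def gDiam {V : Type} [Fintype V] (T : SimpleGraph V) : ℕ :=
  Finset.univ.sup fun p : V × V => T.dist p.1 p.2

/-- The set of boundary edges of `s`, oriented from inside to outside. -/
def bndSet {V : Type} (G : SimpleGraph V) (s : Set V) : Set (V × V) :=
  {p | G.Adj p.1 p.2 ∧ p.1 ∈ s ∧ p.2 ∉ s}

/-- The vertex set of the connected component of `u` in the subgraph induced on `s`. -/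
def comp {V : Type} (G : SimpleGraph V) (s : Set V) (u : V) : Set V :=
  {w | ∃ (hu : u ∈ s) (hw : w ∈ s), (G.induce s).Reachable ⟨u, hu⟩ ⟨w, hw⟩}

/-- The number of neighbors of `v` inside `s`. -/
def degIn {V : Type} (G : SimpleGraph V) (s : Set V) (v : V) : ℕ :=
  Nat.card {w : V // w ∈ s ∧ G.Adj v w}

/-- The deterministic correction `δ_Q(z)`. -/
def deltaQ (N d l : ℕ) (z : ℂ) : ℂ :=
  (((d : ℂ) - 1) ^ (l + 1) - 1) * mSC z ^ (2 * l + 2) *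
    (1 + mSC z / (Real.sqrt ((d : ℝ) - 1) : ℂ)) ^ 2 *
    ((N : ℂ) * ((d : ℂ) / (Real.sqrt ((d : ℝ) - 1) : ℂ) - z))⁻¹

lemma aux_inv {N : ℕ} (A : Matrix (Fin N) (Fin N) ℂ) (hA : A.IsHermitian)
    (w : ℂ) (hw : 0 < w.im) :
    (A - w • 1)⁻¹ = (hA.eigenvectorUnitary : Matrix (Fin N) (Fin N) ℂ) *
      Matrix.diagonal (fun k => ((hA.eigenvalues k : ℂ) - w)⁻¹) *
      star (hA.eigenvectorUnitary : Matrix (Fin N) (Fin N) ℂ) := by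
  set u : Matrix (Fin N) (Fin N) ℂ := (hA.eigenvectorUnitary : Matrix (Fin N) (Fin N) ℂ) with hudef
  have hu1 : u * star u = 1 := (Matrix.mem_unitaryGroup_iff).mp (hA.eigenvectorUnitary).2
  have hu2 : star u * u = 1 := (Matrix.mem_unitaryGroup_iff').mp (hA.eigenvectorUnitary).2
  have hne : ∀ k, ((hA.eigenvalues k : ℂ) - w) ≠ 0 := by
    intro k h
    have := congrArg Complex.im h
    simp at this
    linarith
  apply Matrix.inv_eq_right_inv
  have h1 : A - w • 1 = u * Matrix.diagonal (fun k => (hA.eigenvalues k : ℂ) - w) * star u := by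
    conv_lhs => rw [hA.spectral_theorem, Unitary.conjStarAlgAut_apply]
    have h2 : (w • (1 : Matrix (Fin N) (Fin N) ℂ)) = u * (w • Matrix.diagonal fun _ => (1:ℂ)) * star u := by
      rw [Matrix.mul_smul, Matrix.smul_mul, Matrix.diagonal_one, Matrix.mul_one, hu1]
    rw [h2, ← Matrix.sub_mul, ← Matrix.mul_sub]
    congr 2
    ext k l
    by_cases h : k = l <;> simp [Matrix.diagonal, h, Matrix.smul_apply]
  rw [h1]
  simp only [Matrix.mul_assoc]
  rw [← Matrix.mul_assoc (star u) u, hu2, Matrix.one_mul,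
    ← Matrix.mul_assoc (Matrix.diagonal _) (Matrix.diagonal _),
    Matrix.diagonal_mul_diagonal]
  have h3 : (fun k => ((hA.eigenvalues k : ℂ) - w) * ((hA.eigenvalues k : ℂ) - w)⁻¹) = fun _ => (1:ℂ) := by
    ext k; exact mul_inv_cancel₀ (hne k)
  rw [h3, Matrix.diagonal_one, Matrix.one_mul, hu1]

lemma aux_entry {N : ℕ} (A : Matrix (Fin N) (Fin N) ℂ) (hA : A.IsHermitian)
    (w : ℂ) (hw : 0 < w.im) (i j : Fin N) :
    (A - w • 1)⁻¹ i j = ∑ k, (hA.eigenvectorUnitary : Matrix (Fin N) (Fin N) ℂ) i k *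
      star ((hA.eigenvectorUnitary : Matrix (Fin N) (Fin N) ℂ) j k) *
      ((hA.eigenvalues k : ℂ) - w)⁻¹ := by
  rw [aux_inv A hA w hw, Matrix.mul_assoc, Matrix.mul_apply]
  refine Finset.sum_congr rfl fun k _ => ?_
  rw [Matrix.diagonal_mul, Matrix.star_apply]
  ring


/-- Lipschitz continuity in `z` of the Green's function of a real
symmetric matrix, given a bound on the diagonal entries. -/
theorem statement15 (M : ℝ) (hM : 0 < M) :
    ∃ C : ℝ,
      ∀ (N : ℕ) (H : Matrix (Fin N) (Fin N) ℝ), H.IsSymm →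
        ∀ z : ℂ, 0 < z.im →
          (∀ i : Fin N,
            norm
                (((H.map (Complex.ofReal) - z • (1 : Matrix (Fin N) (Fin N) ℂ))⁻¹) i i) ≤ M) →
          ∀ z' : ℂ, 0 < z'.im → norm (z' - z) ≤ z.im / 2 →
            ∀ i j : Fin N,
              norm
                  (((H.map (Complex.ofReal) - z' • (1 : Matrix (Fin N) (Fin N) ℂ))⁻¹) i j -
                    ((H.map (Complex.ofReal) - z • (1 : Matrix (Fin N) (Fin N) ℂ))⁻¹) i j) ≤
                C * norm (z' - z) / z.im := by
  refine ⟨2 * M, ?_⟩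
  intro N H hsymm z hz hdiag z' hz' hnear i j
  have hA : (H.map (Complex.ofReal)).IsHermitian := by
    ext a b
    simp [Matrix.conjTranspose_apply, Matrix.map_apply, hsymm.apply]
  set u : Matrix (Fin N) (Fin N) ℂ := (hA.eigenvectorUnitary : Matrix (Fin N) (Fin N) ℂ) with hudef
  set lam : Fin N → ℝ := hA.eigenvalues with hlamdef
  set S : Fin N → ℂ → ℝ :=
    fun i w => ∑ k, Complex.normSq (u i k) / Complex.normSq ((lam k : ℂ) - w) with hSdef
  have hne : ∀ (w : ℂ), 0 < w.im → ∀ k, ((lam k : ℂ) - w) ≠ 0 := by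
    intro w hw k h
    have := congrArg Complex.im h
    simp at this
    linarith
  have hpos : ∀ (w : ℂ), 0 < w.im → ∀ k, 0 < Complex.normSq ((lam k : ℂ) - w) :=
    fun w hw k => Complex.normSq_pos.mpr (hne w hw k)
  -- imaginary part of diagonal entries
  have him : ∀ (w : ℂ) (hw : 0 < w.im) (i : Fin N),
      (((H.map (Complex.ofReal) - w • (1 : Matrix (Fin N) (Fin N) ℂ))⁻¹) i i).im
        = w.im * S i w := by
    intro w hw i
    rw [aux_entry _ hA w hw i i, Complex.im_sum, hSdef, Finset.mul_sum]
    refine Finset.sum_congr rfl fun k _ => ?_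
    rw [Complex.star_def, Complex.mul_conj, Complex.im_ofReal_mul, Complex.inv_im]
    have h1 : ((lam k : ℂ) - w).im = -w.im := by simp
    rw [h1]
    field_simp
    simp only [hudef, Matrix.IsHermitian.eigenvectorUnitary_apply]
    ring
  -- bound on S at z
  have hS : ∀ i : Fin N, S i z ≤ M / z.im := by
    intro i
    have h1 := hdiag i
    have h2 := Complex.im_le_norm
      (((H.map (Complex.ofReal) - z • (1 : Matrix (Fin N) (Fin N) ℂ))⁻¹) i i)
    rw [him z hz i] at h2
    rw [le_div_iff₀ hz]
    nlinarith
  have hSnonneg : ∀ (i : Fin N) (w : ℂ), 0 ≤ S i w := by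
    intro i w
    refine Finset.sum_nonneg fun k _ => div_nonneg (Complex.normSq_nonneg _) (Complex.normSq_nonneg _)
  -- |lam - z| ≤ 2 |lam - z'|
  have habs : ∀ k, norm ((lam k : ℂ) - z) ≤ 2 * norm ((lam k : ℂ) - z') := by
    intro k
    have h1 : norm ((lam k : ℂ) - z) ≤ norm ((lam k : ℂ) - z') + norm (z' - z) := by
      have : (lam k : ℂ) - z = ((lam k : ℂ) - z') + (z' - z) := by ring
      rw [this]
      exact norm_add_le _ _
    have h2 : z.im ≤ norm ((lam k : ℂ) - z) := by
      have := Complex.abs_im_le_norm ((lam k : ℂ) - z)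
      have h3 : ((lam k : ℂ) - z).im = -z.im := by simp
      rw [h3, abs_neg, abs_of_pos hz] at this
      exact this
    linarith
  -- bound on S at z'
  have hS' : ∀ i : Fin N, S i z' ≤ 4 * (M / z.im) := by
    intro i
    have h1 : S i z' ≤ 4 * S i z := by
      rw [hSdef, Finset.mul_sum]
      refine Finset.sum_le_sum fun k _ => ?_
      have h2 : Complex.normSq ((lam k : ℂ) - z) ≤ 4 * Complex.normSq ((lam k : ℂ) - z') := by
        rw [← Complex.sq_norm, ← Complex.sq_norm]
        nlinarith [habs k, norm_nonneg ((lam k : ℂ) - z'), norm_nonneg ((lam k : ℂ) - z)]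
      rw [div_le_iff₀ (hpos z' hz' k)]
      have h4 := hpos z hz k
      rw [mul_comm 4, mul_assoc, div_mul_eq_mul_div, le_div_iff₀ h4]
      nlinarith [Complex.normSq_nonneg (u i k)]
    have h5 := hS i
    linarith
  -- the difference
  rw [aux_entry _ hA z' hz' i j, aux_entry _ hA z hz i j, ← Finset.sum_sub_distrib]
  set a : Fin N → ℝ := fun k => norm (u i k) / norm ((lam k : ℂ) - z') with hadef
  set b : Fin N → ℝ := fun k => norm (u j k) / norm ((lam k : ℂ) - z) with hbdef
  have hterm : ∀ k, norm (u i k * star (u j k) * ((lam k : ℂ) - z')⁻¹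
      - u i k * star (u j k) * ((lam k : ℂ) - z)⁻¹)
      = norm (z' - z) * (a k * b k) := by
    intro k
    have h1 : u i k * star (u j k) * ((lam k : ℂ) - z')⁻¹
        - u i k * star (u j k) * ((lam k : ℂ) - z)⁻¹
        = (z' - z) * (u i k * (((lam k : ℂ) - z')⁻¹ * (star (u j k) * ((lam k : ℂ) - z)⁻¹))) := by
      rw [← mul_sub]
      have h2 : ((lam k : ℂ) - z')⁻¹ - ((lam k : ℂ) - z)⁻¹
          = (z' - z) * (((lam k : ℂ) - z')⁻¹ * ((lam k : ℂ) - z)⁻¹) := by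
        rw [inv_sub_inv' (hne z' hz' k) (hne z hz k)]
        have e1 : ((lam k : ℂ) - z) - ((lam k : ℂ) - z') = z' - z := by ring
        rw [e1]
        ring
      rw [h2]
      ring
    rw [h1, norm_mul, norm_mul, norm_mul, norm_mul, norm_inv, norm_inv, hadef, hbdef]
    simp only [Complex.star_def, Complex.norm_conj]
    ring
  calc norm (∑ k, (u i k * star (u j k) * ((lam k : ℂ) - z')⁻¹
          - u i k * star (u j k) * ((lam k : ℂ) - z)⁻¹))
      ≤ ∑ k, norm (u i k * star (u j k) * ((lam k : ℂ) - z')⁻¹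
          - u i k * star (u j k) * ((lam k : ℂ) - z)⁻¹) := norm_sum_le _ _
    _ = norm (z' - z) * ∑ k, a k * b k := by
        rw [Finset.mul_sum]; exact Finset.sum_congr rfl fun k _ => hterm k
    _ ≤ norm (z' - z) * (2 * (M / z.im)) := by
        refine mul_le_mul_of_nonneg_left ?_ (norm_nonneg _)
        have hcs := Finset.sum_mul_sq_le_sq_mul_sq Finset.univ a b
        have ha2 : ∑ k, a k ^ 2 = S i z' := by
          refine Finset.sum_congr rfl fun k _ => ?_
          simp only [hadef, hSdef, div_pow, Complex.sq_norm]
        have hb2 : ∑ k, b k ^ 2 = S j z := by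
          refine Finset.sum_congr rfl fun k _ => ?_
          simp only [hbdef, hSdef, div_pow, Complex.sq_norm]
        rw [ha2, hb2] at hcs
        have habnn : 0 ≤ ∑ k, a k * b k := by
          refine Finset.sum_nonneg fun k _ => mul_nonneg ?_ ?_
          · exact div_nonneg (norm_nonneg _) (norm_nonneg _)
          · exact div_nonneg (norm_nonneg _) (norm_nonneg _)
        have hMzim : 0 ≤ M / z.im := div_nonneg hM.le hz.le
        nlinarith [hS' i, hS j, hSnonneg i z', hSnonneg j z]
    _ ≤ 2 * M * norm (z' - z) / z.im := by
        rw [div_eq_mul_inv, div_eq_mul_inv]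
        ring_nf
        exact le_refl _


end Paper
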